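/- Let A be an m×m complex matrix with operator norm γ = ‖A‖ < 1, let z be a complex number with |z| = 1, and let N be a natural number. Then the matrix I_m - z^{-1}A is invertible and ‖(I_m - z^{-1}A)^{-1} - ∏_{n=0}^{N} (I_m + (z^{-1}A)^{2^n})‖ ≤ γ^{2^{N+1}} / (1 - γ). -/

import Mathlib

open scoped Matrix.Norms.L2Operator

/-- Telescoping identity: `(∏_{n=0}^{N} (1 + B^(2^n))) * (1 - B) = 1 - B^(2^(N+1))`. -/
lemma cascade_prod_mul {R : Type*} [Ring R] (B : R) (N : ℕ) :
    (((List.range (N + 1)).map (fun n => 1 + B ^ 2 ^ n)).prod) * (1 - B)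
      = 1 - B ^ 2 ^ (N + 1) := by
  induction N with
  | zero =>
    simp only [List.range_succ, List.range_zero, List.nil_append, List.map_cons, List.map_nil,
      List.prod_cons, List.prod_nil, mul_one, pow_one, pow_zero]
    rw [show (2:ℕ) ^ (0 + 1) = 2 by norm_num, sq B]
    noncomm_ring
  | succ N ih =>
    rw [show N + 2 = (N + 1) + 1 from rfl, List.range_succ, List.map_append, List.prod_append]
    simp only [List.map_cons, List.map_nil, List.prod_cons, List.prod_nil, mul_one]
    have h1 : Commute (B ^ 2 ^ (N + 1)) B := (Commute.refl B).pow_left _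
    have hc : (1 + B ^ 2 ^ (N + 1)) * (1 - B) = (1 - B) * (1 + B ^ 2 ^ (N + 1)) :=
      (Commute.add_left (Commute.one_left _)
        ((Commute.one_right _).sub_right h1)).eq
    rw [mul_assoc, hc, ← mul_assoc, ih]
    have hpow : B ^ 2 ^ (N + 1) * B ^ 2 ^ (N + 1) = B ^ 2 ^ (N + 2) := by
      rw [← pow_add]
      congr 1
      ring
    calc (1 - B ^ 2 ^ (N + 1)) * (1 + B ^ 2 ^ (N + 1))
        = 1 - B ^ 2 ^ (N + 1) * B ^ 2 ^ (N + 1) := by noncomm_ring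
      _ = 1 - B ^ 2 ^ (N + 2) := by rw [hpow]

theorem cascade_matrix_bound {m : ℕ} (A : Matrix (Fin m) (Fin m) ℂ)
    (γ : ℝ) (hγ : γ = ‖A‖) (hγ1 : γ < 1)
    (z : ℂ) (hz : ‖z‖ = 1) (N : ℕ) :
    IsUnit (1 - z⁻¹ • A) ∧
      ‖(1 - z⁻¹ • A)⁻¹ -
          (((List.range (N + 1)).map (fun n => 1 + (z⁻¹ • A) ^ 2 ^ n)).prod)‖
        ≤ γ ^ 2 ^ (N + 1) / (1 - γ) := by
  set B : Matrix (Fin m) (Fin m) ℂ := z⁻¹ • A with hBdef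
  have hzne : z ≠ 0 := by
    intro h; rw [h] at hz; simp at hz
  have hBnorm : ‖B‖ = γ := by
    rw [hBdef, norm_smul, norm_inv, hz, inv_one, one_mul, hγ]
  have hB1 : ‖B‖ < 1 := by rw [hBnorm]; exact hγ1
  have hγ0 : 0 ≤ γ := by rw [hγ]; exact norm_nonneg _
  have h1γ : (0:ℝ) < 1 - γ := by linarith
  -- invertibility
  have hU : IsUnit (1 - B) := by
    have := (Units.oneSub B hB1).isUnit
    simpa using this
  refine ⟨hU, ?_⟩
  have hdet : IsUnit (1 - B).det := (Matrix.isUnit_iff_isUnit_det _).mp hU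
  have hmul : (1 - B) * (1 - B)⁻¹ = 1 := Matrix.mul_nonsing_inv _ hdet
  have hmul' : (1 - B)⁻¹ * (1 - B) = 1 := Matrix.nonsing_inv_mul _ hdet
  set k : ℕ := 2 ^ (N + 1) with hk
  set P : Matrix (Fin m) (Fin m) ℂ :=
    (((List.range (N + 1)).map (fun n => 1 + B ^ 2 ^ n)).prod) with hP
  have hPeq : P * (1 - B) = 1 - B ^ k := cascade_prod_mul B N
  have hPinv : P = (1 - B ^ k) * (1 - B)⁻¹ := by
    calc P = P * ((1 - B) * (1 - B)⁻¹) := by rw [hmul, mul_one]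
      _ = (P * (1 - B)) * (1 - B)⁻¹ := by rw [mul_assoc]
      _ = (1 - B ^ k) * (1 - B)⁻¹ := by rw [hPeq]
  have hdiff : (1 - B)⁻¹ - P = B ^ k * (1 - B)⁻¹ := by
    rw [hPinv, sub_mul, one_mul, sub_sub_cancel]
  set X : Matrix (Fin m) (Fin m) ℂ := B ^ k * (1 - B)⁻¹ with hX
  have hXeq : X = B ^ k + X * B := by
    have : (1 - B)⁻¹ = 1 + (1 - B)⁻¹ * B := by
      have := hmul'
      rw [mul_sub, mul_one] at this
      linear_combination (norm := noncomm_ring) this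
    calc X = B ^ k * (1 - B)⁻¹ := rfl
      _ = B ^ k * (1 + (1 - B)⁻¹ * B) := by rw [← this]
      _ = B ^ k + B ^ k * (1 - B)⁻¹ * B := by noncomm_ring
      _ = B ^ k + X * B := rfl
  have hBk : ‖B ^ k‖ ≤ γ ^ k := by
    calc ‖B ^ k‖ ≤ ‖B‖ ^ k := norm_pow_le' B (by positivity)
      _ = γ ^ k := by rw [hBnorm]
  have hXbound : ‖X‖ ≤ γ ^ k + ‖X‖ * γ := by
    calc ‖X‖ = ‖B ^ k + X * B‖ := by rw [← hXeq]
      _ ≤ ‖B ^ k‖ + ‖X * B‖ := norm_add_le _ _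
      _ ≤ γ ^ k + ‖X‖ * ‖B‖ := add_le_add hBk (norm_mul_le _ _)
      _ = γ ^ k + ‖X‖ * γ := by rw [hBnorm]
  rw [hdiff]
  rw [le_div_iff₀ h1γ]
  nlinarith [norm_nonneg X]
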